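/- Vanishing lemma for holomorphic functions with one-sided boundary imaginary part: let f : ℂ → ℂ be continuous on the closed unit disc 𝔻 and holomorphic on the open unit disc, and suppose Im f(z) ≥ 0 for every z with |z| = 1. If f(z₀) = 0 for some z₀ with |z₀| < 1, then f vanishes identically on 𝔻. -/

import Mathlib

open Metric Complex

/-- Vanishing lemma: if `f` is continuous on the closed unit disc, holomorphic on the
open unit disc, has nonnegative imaginary part on the unit circle, and vanishes at some
interior point, then `f` vanishes identically on the closed unit disc. -/
theorem vanishing_of_holomorphic_with_one_sided_boundary (f : ℂ → ℂ)
    (hcont : ContinuousOn f (closedBall (0 : ℂ) 1))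
    (hhol : DifferentiableOn ℂ f (ball (0 : ℂ) 1))
    (hbdry : ∀ z : ℂ, ‖z‖ = 1 → 0 ≤ (f z).im)
    (z₀ : ℂ) (hz₀ : ‖z₀‖ < 1) (hf0 : f z₀ = 0) :
    ∀ z ∈ closedBall (0 : ℂ) 1, f z = 0 := by
  set F : ℂ → ℂ := fun z => Complex.exp (I * f z) with hF
  have hz₀b : z₀ ∈ ball (0 : ℂ) 1 := by simpa [Complex.norm_def] using hz₀
  -- F differentiable on the open ball, continuous on the closed ball
  have hFhol : DifferentiableOn ℂ F (ball (0 : ℂ) 1) :=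
    ((hhol.const_mul I).cexp)
  have hFcont : ContinuousOn F (closedBall (0 : ℂ) 1) :=
    ((hcont.const_smul I).cexp)
  -- boundary bound for ‖F‖
  have hbd : ∀ z ∈ frontier (ball (0 : ℂ) 1), ‖F z‖ ≤ 1 := by
    intro z hz
    rw [frontier_ball 0 one_ne_zero] at hz
    have habs : ‖z‖ = 1 := by simpa [Complex.norm_def] using hz
    have := hbdry z habs
    have : ‖F z‖ = Real.exp (-(f z).im) := by
      simp [hF, Complex.norm_exp, Complex.mul_re, Complex.I_re, Complex.I_im]
    rw [this]
    exact Real.exp_le_one_iff.mpr (by linarith [hbdry z habs])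
  -- maximum modulus: ‖F‖ ≤ 1 on the closed ball
  have hmax : ∀ z ∈ closedBall (0 : ℂ) 1, ‖F z‖ ≤ 1 := by
    intro z hz
    have hd : DiffContOnCl ℂ F (ball (0 : ℂ) 1) :=
      ⟨hFhol, by rwa [closure_ball 0 one_ne_zero]⟩
    exact Complex.norm_le_of_forall_mem_frontier_norm_le isBounded_ball hd hbd
      (by rwa [closure_ball 0 one_ne_zero])
  -- F attains the value 1 (maximum modulus) at z₀
  have hFz₀ : F z₀ = 1 := by simp [hF, hf0]
  have hmaxOn : IsMaxOn (norm ∘ F) (ball (0 : ℂ) 1) z₀ := by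
    intro z hz
    simp only [Function.comp_apply, Set.mem_setOf_eq, hFz₀, norm_one]
    exact hmax z (ball_subset_closedBall hz)
  have hFconst : Set.EqOn F (Function.const ℂ (F z₀)) (ball (0 : ℂ) 1) :=
    Complex.eqOn_of_isPreconnected_of_isMaxOn_norm
      (convex_ball (0:ℂ) 1).isPreconnected isOpen_ball hFhol hz₀b hmaxOn
  -- deduce deriv f = 0 on the ball
  have hderiv : ∀ z ∈ ball (0 : ℂ) 1, deriv f z = 0 := by
    intro z hz
    have hfz : DifferentiableAt ℂ f z :=
      hhol.differentiableAt (isOpen_ball.mem_nhds hz)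
    have h1 : HasDerivAt (fun w => I * f w) (I * deriv f z) z :=
      (hfz.hasDerivAt).const_mul I
    have h2 : HasDerivAt F (Complex.exp (I * f z) * (I * deriv f z)) z := h1.cexp
    have hev : F =ᶠ[nhds z] (fun _ => F z₀) :=
      Filter.eventuallyEq_of_mem (isOpen_ball.mem_nhds hz) hFconst
    have h3 : HasDerivAt F 0 z := by
      have : HasDerivAt (fun _ : ℂ => F z₀) 0 z := hasDerivAt_const z _
      exact this.congr_of_eventuallyEq hev
    have h4 : Complex.exp (I * f z) * (I * deriv f z) = 0 :=
      h2.unique h3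
    rcases mul_eq_zero.mp h4 with h | h
    · exact absurd h (Complex.exp_ne_zero _)
    · rcases mul_eq_zero.mp h with h' | h'
      · exact absurd h' I_ne_zero
      · exact h'
  -- f constant (= 0) on the ball
  have hball : ∀ z ∈ ball (0 : ℂ) 1, f z = 0 := by
    intro z hz
    have := (convex_ball (0:ℂ) 1).is_const_of_fderivWithin_eq_zero hhol
      (fun x hx => by
        have hfx : DifferentiableAt ℂ f x :=
          hhol.differentiableAt (isOpen_ball.mem_nhds hx)
        rw [fderivWithin_of_isOpen isOpen_ball hx]
        have : HasDerivAt f 0 x := by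
          have := hfx.hasDerivAt
          rwa [hderiv x hx] at this
        rw [this.hasFDerivAt.fderiv]
        ext
        simp) hz hz₀b
    rw [this, hf0]
  -- extend to the closed ball by continuity
  intro z hz
  have hzc : z ∈ closure (ball (0:ℂ) 1) := by rwa [closure_ball 0 one_ne_zero]
  have hne : (nhdsWithin z (ball (0:ℂ) 1)).NeBot :=
    mem_closure_iff_nhdsWithin_neBot.mp hzc
  have h1 : Filter.Tendsto f (nhdsWithin z (ball (0:ℂ) 1)) (nhds (f z)) :=
    ((hcont z hz).mono ball_subset_closedBall).tendsto
  have h2 : Filter.Tendsto f (nhdsWithin z (ball (0:ℂ) 1)) (nhds 0) := by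
    refine Filter.Tendsto.congr' ?_ tendsto_const_nhds
    exact Filter.eventuallyEq_of_mem self_mem_nhdsWithin (fun x hx => (hball x hx).symm)
  exact tendsto_nhds_unique h1 h2
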